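/- For a positive integer n and real numbers 0 ≤ s ≤ t, the integral ∫_0^s ((s-u)^{n-1}/(n-1)!) * ((t-u)^{n-1}/(n-1)!) du equals ∑_{k=0}^{n-1} (-1)^{n-1-k} * (s^{2n-1-k}/(2n-1-k)!) * (t^k/k!). -/

import Mathlib

lemma J_rec (a b : ℕ) (s t : ℝ) :
    ((a:ℝ)+1) * ∫ u in (0:ℝ)..s, (s-u)^a * (t-u)^(b+1) =
      s^(a+1)*t^(b+1) - ((b:ℝ)+1) * ∫ u in (0:ℝ)..s, (s-u)^(a+1) * (t-u)^b := by
  have hu : ∀ x ∈ Set.uIcc (0:ℝ) s, HasDerivAt (fun x => (t-x)^(b+1))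
      (-(((b:ℝ)+1) * (t-x)^b)) x := by
    intro x _
    have h1 : HasDerivAt (fun x : ℝ => t - x) (-1) x := by
      simpa using (hasDerivAt_id x).const_sub t
    have := h1.fun_pow (b+1)
    simpa [mul_comm, mul_assoc, mul_left_comm] using this
  have hv : ∀ x ∈ Set.uIcc (0:ℝ) s, HasDerivAt (fun x => -(s-x)^(a+1))
      (((a:ℝ)+1) * (s-x)^a) x := by
    intro x _
    have h1 : HasDerivAt (fun x : ℝ => s - x) (-1) x := by
      simpa using (hasDerivAt_id x).const_sub s
    have := (h1.fun_pow (a+1)).fun_neg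
    simpa [mul_comm, mul_assoc, mul_left_comm] using this
  have hint1 : IntervalIntegrable (fun x => -(((b:ℝ)+1) * (t-x)^b)) MeasureTheory.volume 0 s := by
    apply Continuous.intervalIntegrable; continuity
  have hint2 : IntervalIntegrable (fun x => ((a:ℝ)+1) * (s-x)^a) MeasureTheory.volume 0 s := by
    apply Continuous.intervalIntegrable; continuity
  have H := intervalIntegral.integral_mul_deriv_eq_deriv_mul hu hv hint1 hint2
  simp only [sub_self, zero_pow, Nat.succ_ne_zero] at H
  rw [intervalIntegral.integral_congr (g := fun x => ((a:ℝ)+1) * ((s-x)^a * (t-x)^(b+1)))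
    (by intro x _; ring),
    intervalIntegral.integral_const_mul] at H
  rw [show (fun x => -(((b:ℝ)+1) * (t-x)^b) * -(s-x)^(a+1)) = fun x => ((b:ℝ)+1) * ((s-x)^(a+1) * (t-x)^b) from by funext x; ring,
    intervalIntegral.integral_const_mul] at H
  rw [H]; ring

lemma aux1 (b : ℕ) : ∀ (a : ℕ) (s t : ℝ),
    ∫ u in (0:ℝ)..s, ((s-u)^a / (Nat.factorial a)) * ((t-u)^b / (Nat.factorial b)) =
      ∑ j ∈ Finset.range (b+1),
        (-1:ℝ)^(b-j) * (s^(a+b+1-j) / (Nat.factorial (a+b+1-j))) * (t^j / (Nat.factorial j)) := by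
  induction b with
  | zero =>
    intro a s t
    simp only [pow_zero, Nat.factorial_zero, Nat.cast_one, div_one, Finset.sum_range_one,
      Nat.sub_zero, Nat.add_zero, mul_one, pow_zero, one_mul]
    rw [show (fun u => (s-u)^a / (Nat.factorial a : ℝ)) = fun u => ((Nat.factorial a : ℝ))⁻¹ * (s-u)^a from by funext u; ring,
      intervalIntegral.integral_const_mul]
    rw [intervalIntegral.integral_comp_sub_left (fun x => x^a) s]
    have h1 : ∫ x in (s-s)..(s-0), x^a = s^(a+1)/(a+1) := by
      simp [integral_pow]
    have h2 : (Nat.factorial a : ℝ) ≠ 0 := Nat.cast_ne_zero.mpr (Nat.factorial_ne_zero a)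
    have h3 : ((a:ℝ)+1) ≠ 0 := by positivity
    rw [h1, Finset.sum_range_one]
    norm_num [Nat.factorial_succ]
    rw [inv_mul_eq_div, div_div]
  | succ b ih =>
    intro a s t
    have ha : (Nat.factorial a : ℝ) ≠ 0 := Nat.cast_ne_zero.mpr (Nat.factorial_ne_zero a)
    have hb : (Nat.factorial b : ℝ) ≠ 0 := Nat.cast_ne_zero.mpr (Nat.factorial_ne_zero b)
    have ha1 : ((a:ℝ)+1) ≠ 0 := by positivity
    have hb1 : ((b:ℝ)+1) ≠ 0 := by positivity
    have hL : ∫ u in (0:ℝ)..s, ((s-u)^a / (Nat.factorial a)) * ((t-u)^(b+1) / (Nat.factorial (b+1)))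
        = ((Nat.factorial a : ℝ) * (Nat.factorial (b+1)))⁻¹ * ∫ u in (0:ℝ)..s, (s-u)^a * (t-u)^(b+1) := by
      rw [← intervalIntegral.integral_const_mul]
      apply intervalIntegral.integral_congr
      intro x _
      simp only
      ring
    have hI : ∫ u in (0:ℝ)..s, ((s-u)^(a+1) / (Nat.factorial (a+1))) * ((t-u)^b / (Nat.factorial b))
        = ((Nat.factorial (a+1) : ℝ) * (Nat.factorial b))⁻¹ * ∫ u in (0:ℝ)..s, (s-u)^(a+1) * (t-u)^b := by
      rw [← intervalIntegral.integral_const_mul]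
      apply intervalIntegral.integral_congr
      intro x _
      simp only
      ring
    have hSum : (∑ j ∈ Finset.range (b+1),
        (-1:ℝ)^(b-j) * (s^((a+1)+b+1-j) / (Nat.factorial ((a+1)+b+1-j))) * (t^j / (Nat.factorial j)))
        = ((Nat.factorial (a+1) : ℝ) * (Nat.factorial b))⁻¹ * ∫ u in (0:ℝ)..s, (s-u)^(a+1) * (t-u)^b := by
      rw [← ih (a+1) s t, hI]
    have key : (∑ j ∈ Finset.range (b+1+1),
        (-1:ℝ)^(b+1-j) * (s^(a+(b+1)+1-j) / (Nat.factorial (a+(b+1)+1-j))) * (t^j / (Nat.factorial j)))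
        = s^(a+1) / (Nat.factorial (a+1)) * (t^(b+1) / (Nat.factorial (b+1)))
          - ∑ j ∈ Finset.range (b+1),
            (-1:ℝ)^(b-j) * (s^((a+1)+b+1-j) / (Nat.factorial ((a+1)+b+1-j))) * (t^j / (Nat.factorial j)) := by
      rw [Finset.sum_range_succ]
      have e1 : b+1-(b+1) = 0 := by omega
      have e2 : a+(b+1)+1-(b+1) = a+1 := by omega
      rw [e1, e2, pow_zero, one_mul]
      have : (∑ j ∈ Finset.range (b+1),
          (-1:ℝ)^(b+1-j) * (s^(a+(b+1)+1-j) / (Nat.factorial (a+(b+1)+1-j))) * (t^j / (Nat.factorial j)))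
          = -∑ j ∈ Finset.range (b+1),
            (-1:ℝ)^(b-j) * (s^((a+1)+b+1-j) / (Nat.factorial ((a+1)+b+1-j))) * (t^j / (Nat.factorial j)) := by
        rw [← Finset.sum_neg_distrib]
        apply Finset.sum_congr rfl
        intro j hj
        have hjb : j ≤ b := by simpa [Nat.lt_succ_iff] using Finset.mem_range.mp hj
        have e3 : b+1-j = (b-j)+1 := by omega
        have e4 : a+(b+1)+1-j = (a+1)+b+1-j := by omega
        rw [e3, e4, pow_succ]
        ring
      rw [this]
      ring
    have hJ := J_rec a b s t
    have hfa : (Nat.factorial (a+1) : ℝ) = ((a:ℝ)+1) * (Nat.factorial a) := by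
      rw [Nat.factorial_succ]; push_cast; ring
    have hfb : (Nat.factorial (b+1) : ℝ) = ((b:ℝ)+1) * (Nat.factorial b) := by
      rw [Nat.factorial_succ]; push_cast; ring
    set J := ∫ u in (0:ℝ)..s, (s-u)^a * (t-u)^(b+1) with hJdef
    set K := ∫ u in (0:ℝ)..s, (s-u)^(a+1) * (t-u)^b with hKdef
    have hJ' : J = ((a:ℝ)+1)⁻¹ * (s^(a+1)*t^(b+1) - ((b:ℝ)+1)*K) := by
      field_simp
      linear_combination hJ
    rw [hL, key, hSum, hfa, hfb, hJ']
    field_simp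

theorem stmt2 (n : ℕ) (hn : 0 < n) (s t : ℝ) (hs : 0 ≤ s) (hst : s ≤ t) :
    ∫ u in (0:ℝ)..s, ((s-u)^(n-1) / (Nat.factorial (n-1))) * ((t-u)^(n-1) / (Nat.factorial (n-1))) =
      ∑ k ∈ Finset.range n,
        (-1 : ℝ)^(n-1-k) * (s^(2*n-1-k) / (Nat.factorial (2*n-1-k))) * (t^k / (Nat.factorial k)) := by
  obtain ⟨m, rfl⟩ : ∃ m, n = m + 1 := ⟨n - 1, by omega⟩
  simp only [Nat.add_sub_cancel]
  rw [aux1 m m s t]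
  apply Finset.sum_congr rfl
  intro k hk
  have hkm : k ≤ m := by simpa [Nat.lt_succ_iff] using Finset.mem_range.mp hk
  have e1 : 2*(m+1)-1-k = m+m+1-k := by omega
  have e2 : m+1-1-k = m-k := by omega
  rw [e1]
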